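/- For every positive integer c, if G is a c-closed graph and v is a vertex of G, then the subgraph of G induced by the neighborhood N(v) of v is (c-1)-closed. -/

import Mathlib

open SimpleGraph

/-- A graph is `c`-closed if every pair of distinct non-adjacent vertices has
fewer than `c` common neighbors. -/
def IsCClosed {V : Type*} (G : SimpleGraph V) (c : ℕ) : Prop :=
  ∀ u v : V, u ≠ v → ¬G.Adj u v → (G.commonNeighbors u v).ncard < c

theorem stmt0 {V : Type*} [Fintype V] (G : SimpleGraph V) (c : ℕ) (hc : 0 < c)
    (hG : IsCClosed G c) (v : V) :
    IsCClosed (G.induce (G.neighborSet v)) (c - 1) := by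
  classical
  intro u w hne hnadj
  have hne' : (u : V) ≠ (w : V) := fun h => hne (Subtype.ext h)
  have hnadj' : ¬ G.Adj (u : V) (w : V) := hnadj
  have hlt := hG u w hne' hnadj'
  have hvmem : v ∈ G.commonNeighbors (u : V) (w : V) := by
    constructor
    · exact G.adj_symm u.2
    · exact G.adj_symm w.2
  have hsub : Subtype.val '' ((G.induce (G.neighborSet v)).commonNeighbors u w)
      ⊆ (G.commonNeighbors (u : V) (w : V)) \ {v} := by
    rintro x ⟨y, hy, rfl⟩
    refine ⟨⟨hy.1, hy.2⟩, ?_⟩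
    intro hx
    rw [Set.mem_singleton_iff] at hx
    have hy2 : G.Adj v (y : V) := y.2
    rw [hx] at hy2
    exact G.irrefl hy2
  have hfin : (G.commonNeighbors (u : V) (w : V)).Finite := Set.toFinite _
  have h1 : (Subtype.val '' ((G.induce (G.neighborSet v)).commonNeighbors u w)).ncard
      ≤ ((G.commonNeighbors (u : V) (w : V)) \ {v}).ncard :=
    Set.ncard_le_ncard hsub hfin.diff
  have h2 : ((G.commonNeighbors (u : V) (w : V)) \ {v}).ncard
      = (G.commonNeighbors (u : V) (w : V)).ncard - 1 :=
    Set.ncard_diff_singleton_of_mem hvmem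
  have h3 : (Subtype.val '' ((G.induce (G.neighborSet v)).commonNeighbors u w)).ncard
      = ((G.induce (G.neighborSet v)).commonNeighbors u w).ncard :=
    Set.ncard_image_of_injective _ Subtype.val_injective
  have hpos : 1 ≤ (G.commonNeighbors (u : V) (w : V)).ncard :=
    (Set.ncard_pos hfin).2 ⟨v, hvmem⟩
  omega
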